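/- Let 𝒬̃ ⊆ 𝒟 satisfy: every Z̃ ∈ 𝒬̃ is a.s. strictly positive, and for every Z̃ ∈ 𝒬̃ there is an L^∞-dense subset ℰ of 𝒟 ∩ L^∞ such that for all Z ∈ ℰ there is λ ∈ (0,1) with λZ + (1-λ)Z̃ ∈ 𝒬 (a fixed superset of 𝒬̃ in 𝒟). Let Z̃ ∈ 𝒬̃ and let X ∈ L¹ be non-constant with 𝔼[Z̃ X] = 0. Then there exists Z ∈ 𝒬 with 𝔼[-ZX] > 0. -/

import Mathlib

open MeasureTheory
open scoped ENNReal

private lemma stmt7_final {Ω : Type*} [MeasurableSpace Ω] (ℙ : Measure Ω) (f : Ω → ℝ)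
    (hf : Integrable f ℙ) (hneg : ∫ ω, f ω ∂ℙ < 0) :
    (∫⁻ ω, ENNReal.ofReal (f ω) ∂ℙ) < (∫⁻ ω, ENNReal.ofReal (-f ω) ∂ℙ) := by
  have hfin : (∫⁻ ω, (‖f ω‖₊ : ℝ≥0∞) ∂ℙ) < ⊤ := hf.2
  have h1 : (∫⁻ ω, ENNReal.ofReal (f ω) ∂ℙ) ≠ ⊤ := by
    refine ne_of_lt (lt_of_le_of_lt (lintegral_mono fun ω => ?_) hfin)
    rw [← enorm_eq_nnnorm, ← ofReal_norm]
    exact ENNReal.ofReal_le_ofReal (le_abs_self _)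
  have h2 : (∫⁻ ω, ENNReal.ofReal (-f ω) ∂ℙ) ≠ ⊤ := by
    refine ne_of_lt (lt_of_le_of_lt (lintegral_mono fun ω => ?_) hfin)
    rw [← enorm_eq_nnnorm, ← ofReal_norm]
    exact ENNReal.ofReal_le_ofReal (neg_le_abs _)
  rw [integral_eq_lintegral_pos_part_sub_lintegral_neg_part hf] at hneg
  rw [← ENNReal.toReal_lt_toReal h1 h2]
  linarith

/-- If `𝒬̃ ⊆ 𝒟` satisfies Conditions POS and INT (relative to `𝒬`), `Z̃ ∈ 𝒬̃`, and `X ∈ L¹`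
is non-constant with `𝔼[Z̃X] = 0`, then there is `Z ∈ 𝒬` with `𝔼[-ZX] > 0` (with the
convention that `𝔼[-ZX] = +∞` whenever `𝔼[ZX⁻] = ∞`). -/
theorem stmt7 {Ω : Type*} [MeasurableSpace Ω] (ℙ : Measure Ω) [IsProbabilityMeasure ℙ]
    (𝒬 Qt : Set (Ω → ℝ))
    (h𝒬D : 𝒬 ⊆ {Z : Ω → ℝ | Integrable Z ℙ ∧ (∀ᵐ ω ∂ℙ, 0 ≤ Z ω) ∧ (∫ ω, Z ω ∂ℙ) = 1})
    (hQtQ : Qt ⊆ 𝒬)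
    (hPOS : ∀ Zt ∈ Qt, ∀ᵐ ω ∂ℙ, 0 < Zt ω)
    (hINT : ∀ Zt ∈ Qt, ∃ ℰ : Set (Ω → ℝ),
      ℰ ⊆ {Z : Ω → ℝ | Integrable Z ℙ ∧ (∀ᵐ ω ∂ℙ, 0 ≤ Z ω) ∧ (∫ ω, Z ω ∂ℙ) = 1 ∧
        eLpNorm Z ⊤ ℙ < ⊤} ∧
      (∀ W ∈ {Z : Ω → ℝ | Integrable Z ℙ ∧ (∀ᵐ ω ∂ℙ, 0 ≤ Z ω) ∧ (∫ ω, Z ω ∂ℙ) = 1 ∧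
        eLpNorm Z ⊤ ℙ < ⊤}, ∀ ε : ℝ, 0 < ε →
        ∃ Z ∈ ℰ, eLpNorm (fun ω => Z ω - W ω) ⊤ ℙ < ENNReal.ofReal ε) ∧
      (∀ Z ∈ ℰ, ∃ l ∈ Set.Ioo (0 : ℝ) 1,
        (fun ω => l * Z ω + (1 - l) * Zt ω) ∈ 𝒬))
    (Zt : Ω → ℝ) (hZt : Zt ∈ Qt)
    (X : Ω → ℝ) (hX : Integrable X ℙ)
    (hXnc : ¬ ∃ c : ℝ, ∀ᵐ ω ∂ℙ, X ω = c)
    (hZtX : Integrable (fun ω => Zt ω * X ω) ℙ)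
    (horth : ∫ ω, Zt ω * X ω ∂ℙ = 0) :
    ∃ Z ∈ 𝒬,
      (∫⁻ ω, ENNReal.ofReal (-(Z ω * X ω)) ∂ℙ) = ⊤ ∨
      (∫⁻ ω, ENNReal.ofReal (Z ω * X ω) ∂ℙ) < (∫⁻ ω, ENNReal.ofReal (-(Z ω * X ω)) ∂ℙ) := by
  have hpos : ∀ᵐ ω ∂ℙ, 0 < Zt ω := hPOS Zt hZt
  -- Step 1: X is not a.e. nonnegative
  have hnotnonneg : ¬ (∀ᵐ ω ∂ℙ, 0 ≤ X ω) := by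
    intro h0
    have hZX0 : ∀ᵐ ω ∂ℙ, 0 ≤ Zt ω * X ω := by
      filter_upwards [h0, hpos] with ω h1 h2
      exact mul_nonneg h2.le h1
    have := (integral_eq_zero_iff_of_nonneg_ae hZX0 hZtX).mp horth
    have hX0 : ∀ᵐ ω ∂ℙ, X ω = 0 := by
      filter_upwards [this, hpos] with ω h1 h2
      have h3 : Zt ω * X ω = 0 := h1
      rcases mul_eq_zero.mp h3 with h | h
      · exact absurd h (ne_of_gt h2)
      · exact h
    exact hXnc ⟨0, hX0⟩
  -- measurable version of X
  set X' := hX.1.mk X with hX'def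
  have hXX' : X =ᵐ[ℙ] X' := hX.1.ae_eq_mk
  have hX'm : Measurable X' := hX.1.stronglyMeasurable_mk.measurable
  have hnegset : ℙ {ω | X' ω < 0} ≠ 0 := by
    intro hnull
    apply hnotnonneg
    have h' : ∀ᵐ ω ∂ℙ, ¬ X' ω < 0 := by rw [ae_iff]; simpa using hnull
    filter_upwards [hXX', h'] with ω h1 h2
    rw [h1]; simpa using h2
  -- Step 2: find δ > 0 with ℙ {X' ≤ -δ} > 0
  obtain ⟨n, hn⟩ : ∃ n : ℕ, ℙ {ω | X' ω ≤ -(1/(n+1))} ≠ 0 := by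
    by_contra hall
    push_neg at hall
    apply hnegset
    have hsub : {ω | X' ω < 0} ⊆ ⋃ n : ℕ, {ω | X' ω ≤ -(1/(n+1))} := by
      intro ω hω
      simp only [Set.mem_setOf_eq] at hω
      obtain ⟨n, hn⟩ := exists_nat_one_div_lt (show (0:ℝ) < -X' ω by linarith)
      exact Set.mem_iUnion.mpr ⟨n, by simp only [Set.mem_setOf_eq]; linarith⟩
    exact measure_mono_null hsub (measure_iUnion_null fun n => hall n)
  set δ : ℝ := 1/(n+1) with hδdef
  have hδ : 0 < δ := by positivity
  -- Step 3: build W = normalized indicator of A = {X' ≤ -δ}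
  set A : Set Ω := {ω | X' ω ≤ -δ} with hAdef
  have hA : MeasurableSet A := hX'm measurableSet_Iic
  have hAfin : ℙ A < ⊤ := measure_lt_top _ _
  set c : ℝ := (ℙ A).toReal with hcdef
  have hc : 0 < c := ENNReal.toReal_pos hn hAfin.ne
  set W : Ω → ℝ := A.indicator (fun _ => c⁻¹) with hWdef
  have hWbd : ∀ ω, ‖W ω‖ ≤ c⁻¹ := by
    intro ω
    rw [Real.norm_eq_abs]
    rcases Set.indicator_eq_zero_or_self A (fun _ => c⁻¹) ω with h | h <;> rw [hWdef, h]
    · simpa using le_of_lt (inv_pos.mpr hc)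
    · simp [abs_of_nonneg (le_of_lt (inv_pos.mpr hc))]
  have hWmem : W ∈ {Z : Ω → ℝ | Integrable Z ℙ ∧ (∀ᵐ ω ∂ℙ, 0 ≤ Z ω) ∧ (∫ ω, Z ω ∂ℙ) = 1 ∧
      eLpNorm Z ⊤ ℙ < ⊤} := by
    refine ⟨(integrable_const _).indicator hA, ?_, ?_, ?_⟩
    · exact Filter.Eventually.of_forall fun ω =>
        Set.indicator_nonneg (fun _ _ => by positivity) ω
    · rw [hWdef, integral_indicator_const _ hA]
      simp only [smul_eq_mul, measureReal_def, ← hcdef]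
      field_simp
    · rw [eLpNorm_exponent_top]
      exact eLpNormEssSup_lt_top_of_ae_bound (C := c⁻¹) (Filter.Eventually.of_forall hWbd)
  have hWX : Integrable (fun ω => W ω * X ω) ℙ :=
    Integrable.bdd_mul hX hWmem.1.1 (Filter.Eventually.of_forall hWbd)
  have hWXle : ∫ ω, W ω * X ω ∂ℙ ≤ -δ := by
    have heq : (fun ω => W ω * X ω) = A.indicator (fun ω => c⁻¹ * X ω) := by
      funext ω
      by_cases h : ω ∈ A <;>
        simp [hWdef, Set.indicator_of_mem, Set.indicator_of_notMem, h]
    rw [heq, integral_indicator hA]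
    have hXle : ∀ᵐ ω ∂(ℙ.restrict A), X ω ≤ -δ := by
      filter_upwards [ae_restrict_of_ae hXX', ae_restrict_mem hA] with ω h1 h2
      rw [h1]; exact h2
    have h1 : ∫ ω in A, c⁻¹ * X ω ∂ℙ = c⁻¹ * ∫ ω in A, X ω ∂ℙ := integral_const_mul _ _
    have h2 : ∫ ω in A, X ω ∂ℙ ≤ ∫ ω in A, (-δ) ∂ℙ :=
      integral_mono_ae hX.integrableOn (integrableOn_const hAfin.ne) hXle
    rw [setIntegral_const] at h2
    rw [h1]
    calc c⁻¹ * ∫ ω in A, X ω ∂ℙ ≤ c⁻¹ * ((ℙ A).toReal • (-δ)) :=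
          mul_le_mul_of_nonneg_left h2 (le_of_lt (inv_pos.mpr hc))
      _ = -δ := by
          simp only [smul_eq_mul, ← hcdef]
          field_simp
  -- Step 4: approximate W by Z ∈ ℰ
  obtain ⟨ℰ, hℰD, hdense, hlam⟩ := hINT Zt hZt
  set M : ℝ := ∫ ω, ‖X ω‖ ∂ℙ with hMdef
  have hM0 : 0 ≤ M := integral_nonneg fun ω => norm_nonneg _
  set ε : ℝ := δ / (2 * (M + 1)) with hεdef
  have hε : 0 < ε := by positivity
  obtain ⟨Z, hZℰ, hnear⟩ := hdense W hWmem ε hε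
  obtain ⟨hZint, hZnn, hZone, hZbdd⟩ := hℰD hZℰ
  have hdiff : ∀ᵐ ω ∂ℙ, |Z ω - W ω| ≤ ε := by
    filter_upwards [ae_le_eLpNormEssSup (f := fun ω => Z ω - W ω) (μ := ℙ)] with ω hω
    have h2 : (‖Z ω - W ω‖₊ : ℝ≥0∞) ≤ ENNReal.ofReal ε := by
      refine le_trans hω ?_
      rw [← eLpNorm_exponent_top]
      exact hnear.le
    rw [← enorm_eq_nnnorm, ← ofReal_norm, Real.norm_eq_abs] at h2
    exact (ENNReal.ofReal_le_ofReal_iff hε.le).mp h2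
  have hC : ∀ᵐ ω ∂ℙ, ‖Z ω‖ ≤ (eLpNormEssSup Z ℙ).toReal := by
    filter_upwards [ae_le_eLpNormEssSup (f := Z) (μ := ℙ)] with ω hω
    rw [← ofReal_norm] at hω
    have htop : eLpNormEssSup Z ℙ ≠ ⊤ := by rwa [← eLpNorm_exponent_top, ← lt_top_iff_ne_top]
    calc ‖Z ω‖ = (ENNReal.ofReal ‖Z ω‖).toReal := by rw [ENNReal.toReal_ofReal (norm_nonneg _)]
      _ ≤ _ := ENNReal.toReal_mono htop hω
  have hZX : Integrable (fun ω => Z ω * X ω) ℙ := Integrable.bdd_mul hX hZint.1 hC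
  have hZXneg : ∫ ω, Z ω * X ω ∂ℙ < 0 := by
    have hbound : ∫ ω, (Z ω * X ω - W ω * X ω) ∂ℙ ≤ ∫ ω, ε * ‖X ω‖ ∂ℙ := by
      refine integral_mono_ae (hZX.sub hWX) (hX.norm.const_mul ε) ?_
      filter_upwards [hdiff] with ω hω
      have h3 : Z ω * X ω - W ω * X ω = (Z ω - W ω) * X ω := by ring
      rw [h3]
      calc (Z ω - W ω) * X ω ≤ |(Z ω - W ω) * X ω| := le_abs_self _
        _ = |Z ω - W ω| * |X ω| := abs_mul _ _
        _ ≤ ε * |X ω| := mul_le_mul_of_nonneg_right hω (abs_nonneg _)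
        _ = ε * ‖X ω‖ := by rw [Real.norm_eq_abs]
    rw [integral_sub hZX hWX, integral_const_mul] at hbound
    have hεM : ε * M < δ / 2 := by
      rw [hεdef, div_mul_eq_mul_div]
      rw [div_lt_div_iff₀ (by positivity) (by norm_num)]
      nlinarith
    linarith
  -- Step 5: mix Z with Zt
  obtain ⟨l, hl, hY𝒬⟩ := hlam Z hZℰ
  refine ⟨fun ω => l * Z ω + (1 - l) * Zt ω, hY𝒬, Or.inr ?_⟩
  have heqY : (fun ω => (l * Z ω + (1 - l) * Zt ω) * X ω)
      = fun ω => l * (Z ω * X ω) + (1 - l) * (Zt ω * X ω) := by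
    funext ω; ring
  have hYX : Integrable (fun ω => (l * Z ω + (1 - l) * Zt ω) * X ω) ℙ := by
    rw [heqY]
    exact (hZX.const_mul l).add (hZtX.const_mul (1 - l))
  have hYXneg : ∫ ω, (l * Z ω + (1 - l) * Zt ω) * X ω ∂ℙ < 0 := by
    rw [heqY, integral_add ((hZX.const_mul l)) (hZtX.const_mul (1 - l)),
      integral_const_mul, integral_const_mul, horth]
    have := mul_neg_of_pos_of_neg hl.1 hZXneg
    linarith
  have := stmt7_final ℙ _ hYX hYXneg
  convert this using 2 <;> ring_nf
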